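/- The stabilizer of the lattice A·ℤ^n inside the hyperoctahedral group (realized as signed permutation matrices S with S·A·ℤ^n = A·ℤ^n) is a cyclic group of order 2n, generated by the signed permutation matrix S_0 with (S_0)_{i+1,i} = 1 for i < n and (S_0)_{1,n} = −1. -/

import Mathlib

/-- The matrix `A` with `q` on the diagonal, `-p` on the subdiagonal,
`p` in the top-right corner (entry `(1,n)`), and `0` elsewhere. -/
def tilingMatrix (p q : ℝ) (n : ℕ) : Matrix (Fin n) (Fin n) ℝ :=
  Matrix.of fun i j =>
    if (i : ℕ) = (j : ℕ) then q
    else if (i : ℕ) = (j : ℕ) + 1 then -p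
    else if (i : ℕ) = 0 ∧ (j : ℕ) = n - 1 then p
    else 0

/-- The lattice `A·ℤⁿ` of integer linear combinations of the columns of `A`. -/
def latticeA (p q : ℝ) (n : ℕ) : Set (Fin n → ℝ) :=
  {x | ∃ z : Fin n → ℤ, x = (tilingMatrix p q n).mulVec fun i => (z i : ℝ)}

/-- A signed permutation matrix: all entries in `{0, ±1}`, with exactly one
nonzero entry in each row and each column. -/
def IsSignedPerm {n : ℕ} (S : Matrix (Fin n) (Fin n) ℝ) : Prop :=
  (∀ i j, S i j = 0 ∨ S i j = 1 ∨ S i j = -1) ∧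
    (∀ i, ∃! j, S i j ≠ 0) ∧ (∀ j, ∃! i, S i j ≠ 0)

/-- The signed permutation matrix `S₀` with `(S₀)_{i+1,i} = 1` for `i < n`
and `(S₀)_{1,n} = -1`. -/
def cycGen (n : ℕ) : Matrix (Fin n) (Fin n) ℝ :=
  Matrix.of fun i j =>
    if (i : ℕ) = (j : ℕ) + 1 then 1
    else if (i : ℕ) = 0 ∧ (j : ℕ) = n - 1 then -1
    else 0

namespace StabProof

def P (n k : ℕ) : Matrix (Fin n) (Fin n) ℝ :=
  Matrix.of fun i j => if (i : ℕ) = ((j : ℕ) + k) % n then (-1 : ℝ) ^ (((j : ℕ) + k) / n) else 0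

variable {n : ℕ}

lemma P_zero (hn : 0 < n) : P n 0 = 1 := by
  ext i j
  simp only [P, Matrix.of_apply, Matrix.one_apply, Nat.add_zero,
    Nat.mod_eq_of_lt j.isLt, Nat.div_eq_of_lt j.isLt, pow_zero, Fin.ext_iff]

lemma P_mul (hn : 0 < n) (a b : ℕ) : P n a * P n b = P n (a + b) := by
  ext i j
  rw [Matrix.mul_apply]
  have hm : ((j : ℕ) + b) % n < n := Nat.mod_lt _ hn
  rw [Finset.sum_eq_single (⟨((j : ℕ) + b) % n, hm⟩ : Fin n)]
  · have h1 : (((j : ℕ) + b) % n + a) % n = ((j : ℕ) + (a + b)) % n := by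
      conv_rhs => rw [show (j : ℕ) + (a + b) = ((j : ℕ) + b) + a by ring]
      rw [Nat.mod_add_mod]
    have h2 : (((j : ℕ) + b) % n + a) / n + ((j : ℕ) + b) / n = ((j : ℕ) + (a + b)) / n := by
      conv_rhs => rw [show (j : ℕ) + (a + b) = (((j : ℕ) + b) % n + a) + n * (((j : ℕ) + b) / n) by
        have := Nat.div_add_mod ((j : ℕ) + b) n; omega]
      rw [Nat.add_mul_div_left _ _ hn]
    simp only [P, Matrix.of_apply, Fin.val_mk, h1, eq_self_iff_true, if_true]
    split
    · rw [← h2, pow_add]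
    · rw [zero_mul]
  · intro m _ hm'
    have : ¬ ((m : ℕ) = ((j : ℕ) + b) % n) := by
      intro h; exact hm' (Fin.ext h)
    simp only [P, Matrix.of_apply, this, if_false, mul_zero]
  · intro h; exact absurd (Finset.mem_univ _) h

lemma cycGen_eq (hn : 2 ≤ n) : cycGen n = P n 1 := by
  ext i j
  simp only [cycGen, P, Matrix.of_apply]
  by_cases hj : (j : ℕ) < n - 1
  · rw [Nat.mod_eq_of_lt (by omega), Nat.div_eq_of_lt (by omega), pow_zero]
    have : ¬ ((i : ℕ) = 0 ∧ (j : ℕ) = n - 1) := by omega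
    simp only [this, if_false]
  · have hj' : (j : ℕ) = n - 1 := by have := j.isLt; omega
    have h1 : ((j : ℕ) + 1) % n = 0 := by rw [show (j:ℕ) + 1 = n by omega, Nat.mod_self]
    have h2 : ((j : ℕ) + 1) / n = 1 := by rw [show (j:ℕ) + 1 = n by omega, Nat.div_self (by omega)]
    rw [h1, h2, pow_one]
    have hni : ¬ ((i : ℕ) = (j : ℕ) + 1) := by have := i.isLt; omega
    simp only [hni, if_false]
    simp only [hj', and_true]

lemma powFormula (hn : 2 ≤ n) (k : ℕ) : cycGen n ^ k = P n k := by
  induction k with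
  | zero => rw [pow_zero, P_zero (by omega)]
  | succ k ih => rw [pow_succ, ih, cycGen_eq hn, P_mul (by omega)]

lemma pow_two_n (hn : 2 ≤ n) : cycGen n ^ (2 * n) = 1 := by
  rw [powFormula hn]
  ext i j
  simp only [P, Matrix.of_apply, Matrix.one_apply, Fin.ext_iff]
  rw [Nat.add_mul_mod_self_right, Nat.mod_eq_of_lt j.isLt,
    Nat.add_mul_div_right _ _ (show 0 < n by omega), Nat.div_eq_of_lt j.isLt]
  norm_num

lemma pow_ne_one (hn : 2 ≤ n) (m : ℕ) (hm0 : 0 < m) (hm : m < 2 * n) : cycGen n ^ m ≠ 1 := by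
  rw [powFormula hn]
  intro h
  have hn0 : 0 < n := by omega
  by_cases hc : m % n = 0
  · have hmn : m = n := by
      rcases Nat.dvd_of_mod_eq_zero hc with ⟨c, rfl⟩
      rcases c with _ | _ | c
      · simp at hm0
      · exact mul_one n
      · exfalso
        have h' : n * (c + 1 + 1) = n * c + 2 * n := by ring
        omega
    rw [hmn] at h
    have h2 := congrFun (congrFun h (⟨0, hn0⟩ : Fin n)) (⟨0, hn0⟩ : Fin n)
    rw [Matrix.one_apply_eq] at h2
    simp only [P, Matrix.of_apply, Fin.val_mk] at h2
    rw [if_pos (by simp [Nat.mod_self])] at h2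
    rw [Nat.zero_add, Nat.div_self hn0, pow_one] at h2
    norm_num at h2
  · have hlt : m % n < n := Nat.mod_lt _ hn0
    have h2 := congrFun (congrFun h (⟨m % n, hlt⟩ : Fin n)) (⟨0, hn0⟩ : Fin n)
    rw [Matrix.one_apply_ne (by simp [Fin.ext_iff, hc])] at h2
    simp only [P, Matrix.of_apply, Fin.val_mk] at h2
    rw [if_pos (by simp)] at h2
    exact pow_ne_zero _ (by norm_num : (-1:ℝ) ≠ 0) h2



def nxt {n : ℕ} (i : Fin n) : Fin n := ⟨((i : ℕ) + 1) % n, Nat.mod_lt _ i.pos⟩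
def prv {n : ℕ} (i : Fin n) : Fin n := ⟨((i : ℕ) + (n - 1)) % n, Nat.mod_lt _ i.pos⟩
def sgn {n : ℕ} (i : Fin n) : ℝ := if (i : ℕ) = 0 then -1 else 1
def sgnZ {n : ℕ} (i : Fin n) : ℤ := if (i : ℕ) = 0 then -1 else 1

lemma nxt_val (j : Fin n) : (nxt j : ℕ) = if (j : ℕ) = n - 1 then 0 else (j : ℕ) + 1 := by
  have := j.isLt
  simp only [nxt]
  split_ifs with h
  · rw [show (j:ℕ) + 1 = n by omega, Nat.mod_self]
  · exact Nat.mod_eq_of_lt (by omega)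

lemma prv_val (i : Fin n) : (prv i : ℕ) = if (i : ℕ) = 0 then n - 1 else (i : ℕ) - 1 := by
  have := i.isLt
  simp only [prv]
  split_ifs with h
  · rw [h, Nat.zero_add, Nat.mod_eq_of_lt (by omega)]
  · rw [show (i:ℕ) + (n-1) = ((i:ℕ) - 1) + n by omega, Nat.add_mod_right,
      Nat.mod_eq_of_lt (by omega)]

lemma prv_nxt (j : Fin n) : prv (nxt j) = j := by
  have := j.isLt
  apply Fin.ext
  rw [prv_val, nxt_val]
  split_ifs <;> first | omega | (exact (by assumption : False).elim)

lemma prv_inj : Function.Injective (prv (n := n)) := by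
  intro a b h
  have h' := congrArg Fin.val h
  rw [prv_val, prv_val] at h'
  have ha := a.isLt; have hb := b.isLt
  apply Fin.ext
  split_ifs at h' <;> first | omega | (exact (by assumption : False).elim)

lemma prv_eq_iff {i j : Fin n} : prv i = j ↔ i = nxt j :=
  ⟨fun h => prv_inj (h.trans (prv_nxt j).symm), fun h => by rw [h, prv_nxt]⟩

lemma nxt_ne (hn : 2 ≤ n) (j : Fin n) : nxt j ≠ j := by
  intro h
  have h' := congrArg Fin.val h
  have := j.isLt
  rw [nxt_val] at h'
  split_ifs at h' <;> first | omega | (exact (by assumption : False).elim)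

lemma prv_ne (hn : 2 ≤ n) (j : Fin n) : prv j ≠ j := by
  intro h
  have h' := congrArg Fin.val h
  have := j.isLt
  rw [prv_val] at h'
  split_ifs at h' <;> first | omega | (exact (by assumption : False).elim)

lemma eq_prv_of (hn : 0 < n) {i m : Fin n} (h : (i : ℕ) = ((m : ℕ) + 1) % n) : m = prv i := by
  have hm := m.isLt; have hi := i.isLt
  apply Fin.ext
  rw [prv_val]
  by_cases hc : (m : ℕ) + 1 = n
  · rw [hc, Nat.mod_self] at h
    rw [if_pos h]; omega
  · rw [Nat.mod_eq_of_lt (by omega)] at h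
    rw [if_neg (by omega)]; omega

lemma P1_mulVec (hn : 0 < n) (v : Fin n → ℝ) :
    (P n 1).mulVec v = fun i => sgn i * v (prv i) := by
  funext i
  simp only [Matrix.mulVec, dotProduct, P, Matrix.of_apply]
  rw [Finset.sum_eq_single (prv i)]
  · have hlt := i.isLt
    have h1 : (i : ℕ) = ((prv i : ℕ) + 1) % n := by
      rw [prv_val]
      split_ifs with h
      · rw [show n - 1 + 1 = n by omega, Nat.mod_self, h]
      · rw [show (i:ℕ) - 1 + 1 = (i:ℕ) by omega, Nat.mod_eq_of_lt hlt]
    have h2 : ((prv i : ℕ) + 1) / n = if (i : ℕ) = 0 then 1 else 0 := by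
      rw [prv_val]
      split_ifs with h
      · rw [show n - 1 + 1 = n by omega, Nat.div_self hn]
      · rw [show (i:ℕ) - 1 + 1 = (i:ℕ) by omega]
        exact Nat.div_eq_of_lt hlt
    rw [if_pos h1, h2]
    simp only [sgn]
    split_ifs <;> norm_num
  · intro m _ hm
    rw [if_neg, zero_mul]
    intro hcon
    exact hm (eq_prv_of hn hcon)
  · intro h; exact absurd (Finset.mem_univ _) h

lemma A_eq (p q : ℝ) (hn : 2 ≤ n) :
    tilingMatrix p q n = q • (1 : Matrix (Fin n) (Fin n) ℝ) - p • P n 1 := by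
  ext i j
  have hi := i.isLt; have hj := j.isLt
  simp only [tilingMatrix, Matrix.of_apply, Matrix.sub_apply, Matrix.smul_apply, Matrix.one_apply,
    P, smul_eq_mul, Fin.ext_iff]
  by_cases hj' : (j : ℕ) = n - 1
  · have h1 : ((j:ℕ)+1) % n = 0 := by rw [show (j:ℕ)+1 = n by omega, Nat.mod_self]
    have h2 : ((j:ℕ)+1) / n = 1 := by rw [show (j:ℕ)+1 = n by omega, Nat.div_self (by omega)]
    rw [h1, h2, pow_one]
    split_ifs <;> first | ring1 | omega | (exfalso; omega)
  · have h1 : ((j:ℕ)+1) % n = (j:ℕ)+1 := Nat.mod_eq_of_lt (by omega)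
    have h2 : ((j:ℕ)+1) / n = 0 := Nat.div_eq_of_lt (by omega)
    rw [h1, h2, pow_zero]
    split_ifs <;> first | ring1 | omega | (exfalso; omega)

lemma A_mulVec (p q : ℝ) (hn : 2 ≤ n) (v : Fin n → ℝ) :
    (tilingMatrix p q n).mulVec v = fun i => q * v i - p * (sgn i * v (prv i)) := by
  rw [A_eq p q hn, Matrix.sub_mulVec, Matrix.smul_mulVec, Matrix.smul_mulVec,
    Matrix.one_mulVec, P1_mulVec (by omega) v]
  funext i
  simp [smul_eq_mul]

lemma row_index (hn : 0 < n) (k : ℕ) (i : Fin n) :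
    (i : ℕ) = ((((i : ℕ) + (n - k % n)) % n) + k) % n := by
  rw [Nat.mod_add_mod]
  rw [show (i:ℕ) + (n - k % n) + k = ((i:ℕ) + n) + n * (k / n) by
    have h1 := Nat.div_add_mod k n
    have h2 : k % n < n := Nat.mod_lt _ hn
    omega]
  rw [Nat.add_mul_mod_self_left, Nat.add_mod_right, Nat.mod_eq_of_lt i.isLt]

lemma isSignedPerm_P (hn : 0 < n) (k : ℕ) : IsSignedPerm (P n k) := by
  refine ⟨?_, ?_, ?_⟩
  · intro i j
    simp only [P, Matrix.of_apply]
    split_ifs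
    · rcases Nat.even_or_odd (((j:ℕ)+k)/n) with he | ho
      · right; left; exact he.neg_one_pow
      · right; right; exact ho.neg_one_pow
    · left; rfl
  · intro i
    refine ⟨⟨((i:ℕ) + (n - k % n)) % n, Nat.mod_lt _ hn⟩, ?_, ?_⟩
    · simp only [P, Matrix.of_apply, Fin.val_mk]
      rw [if_pos (row_index hn k i)]
      exact pow_ne_zero _ (by norm_num)
    · intro j hj
      simp only [P, Matrix.of_apply] at hj
      have hc : (i:ℕ) = ((j:ℕ)+k) % n := by
        by_contra hcon; rw [if_neg hcon] at hj; exact hj rfl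
      apply Fin.ext
      simp only [Fin.val_mk]
      have h' : ((j:ℕ) + k) % n = ((((i:ℕ) + (n - k % n)) % n) + k) % n := by
        rw [← hc]; exact row_index hn k i
      have h2 : (j:ℕ) % n = (((i:ℕ) + (n - k % n)) % n) % n :=
        Nat.ModEq.add_right_cancel' k h'
      rwa [Nat.mod_eq_of_lt j.isLt, Nat.mod_mod_of_dvd _ dvd_rfl] at h2
  · intro j
    refine ⟨⟨((j:ℕ) + k) % n, Nat.mod_lt _ hn⟩, ?_, ?_⟩
    · simp only [P, Matrix.of_apply, Fin.val_mk, eq_self_iff_true, if_true]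
      exact pow_ne_zero _ (by norm_num)
    · intro i hi
      simp only [P, Matrix.of_apply] at hi
      have hc : (i:ℕ) = ((j:ℕ)+k) % n := by
        by_contra hcon; rw [if_neg hcon] at hi; exact hi rfl
      exact Fin.ext hc

def PZ (n k : ℕ) : Matrix (Fin n) (Fin n) ℤ :=
  Matrix.of fun i j => if (i : ℕ) = ((j : ℕ) + k) % n then (-1 : ℤ) ^ (((j : ℕ) + k) / n) else 0

lemma P_eq_map (k : ℕ) : P n k = (PZ n k).map (fun x : ℤ => (x : ℝ)) := by
  ext i j
  simp only [P, PZ, Matrix.map_apply, Matrix.of_apply]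
  split_ifs <;> push_cast <;> ring

lemma map_mulVec_cast (M : Matrix (Fin n) (Fin n) ℤ) (z : Fin n → ℤ) :
    (M.map (fun x : ℤ => (x : ℝ))).mulVec (fun i => (z i : ℝ)) = fun i => ((M.mulVec z) i : ℝ) := by
  funext i
  simp only [Matrix.mulVec, dotProduct, Matrix.map_apply]
  push_cast
  rfl

lemma commute_PA (p q : ℝ) (hn : 2 ≤ n) : Commute (cycGen n) (tilingMatrix p q n) := by
  show _ * _ = _ * _
  rw [cycGen_eq hn, A_eq p q hn]
  simp only [mul_sub, sub_mul, Matrix.mul_smul, Matrix.smul_mul, mul_one, one_mul]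

lemma pow_preserves (p q : ℝ) (hn : 2 ≤ n) (k : ℕ) (x : Fin n → ℝ) (hx : x ∈ latticeA p q n) :
    (cycGen n ^ k).mulVec x ∈ latticeA p q n := by
  obtain ⟨z, rfl⟩ := hx
  refine ⟨(PZ n k).mulVec z, ?_⟩
  rw [Matrix.mulVec_mulVec, ((commute_PA p q hn).pow_left k).eq, ← Matrix.mulVec_mulVec,
    powFormula hn, P_eq_map, map_mulVec_cast]



def wvec {n : ℕ} (z : Fin n → ℤ) : Fin n → ℤ := fun i => sgnZ i * z (prv i)

lemma prv_bij : Function.Bijective (prv (n := n)) :=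
  ⟨prv_inj, Finite.surjective_of_injective prv_inj⟩

lemma sum_w_sq (z : Fin n → ℤ) : ∑ i, (wvec z i)^2 = ∑ i, (z i)^2 := by
  have h1 : ∀ i : Fin n, (wvec z i)^2 = (z (prv i))^2 := by
    intro i; simp only [wvec, sgnZ]; split_ifs <;> ring
  rw [Finset.sum_congr rfl (fun i _ => h1 i)]
  exact Fintype.sum_bijective prv prv_bij _ _ (fun i => rfl)

lemma abstract_id (p q : ℝ) (z w : Fin n → ℝ) (hw : ∑ i, (w i)^2 = ∑ i, (z i)^2) :
    ∑ i, (q * z i - p * w i)^2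
      = (p - q)^2 * ∑ i, (z i)^2 + p * q * ∑ i, (z i - w i)^2 := by
  have h1 : ∑ i, (q * z i - p * w i)^2
      = q^2 * ∑ i, (z i)^2 + p^2 * ∑ i, (w i)^2 - 2*(p*q) * ∑ i, (z i * w i) := by
    rw [Finset.mul_sum, Finset.mul_sum, Finset.mul_sum, ← Finset.sum_add_distrib,
      ← Finset.sum_sub_distrib]
    exact Finset.sum_congr rfl fun i _ => by ring
  have h2 : ∑ i, (z i - w i)^2
      = ∑ i, (z i)^2 + ∑ i, (w i)^2 - 2 * ∑ i, (z i * w i) := by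
    rw [Finset.mul_sum, ← Finset.sum_add_distrib, ← Finset.sum_sub_distrib]
    exact Finset.sum_congr rfl fun i _ => by ring
  rw [h1, h2, hw]; ring

lemma sum_sq_identity (p q : ℝ) (hn : 2 ≤ n) (z : Fin n → ℤ) :
    ∑ i, ((tilingMatrix p q n).mulVec (fun j => (z j : ℝ)) i)^2
      = (p - q)^2 * ∑ i, ((z i : ℝ))^2 + p * q * ∑ i, ((z i : ℝ) - (wvec z i : ℝ))^2 := by
  rw [A_mulVec p q hn]
  have he : ∀ i : Fin n, (q * ((z i : ℝ)) - p * (sgn i * ((z (prv i) : ℝ))))^2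
      = (q * ((z i : ℝ)) - p * ((wvec z i : ℝ)))^2 := by
    intro i; simp only [wvec, sgn, sgnZ]; split_ifs <;> push_cast <;> ring
  calc ∑ i, ((fun i => q * ((z i:ℝ)) - p * (sgn i * ((z (prv i):ℝ)))) i)^2
      = ∑ i, (q * ((z i:ℝ)) - p * ((wvec z i : ℝ)))^2 :=
        Finset.sum_congr rfl fun i _ => he i
    _ = _ := by
        refine abstract_id p q _ _ ?_
        have h := congrArg (fun t : ℤ => (t : ℝ)) (sum_w_sq z)
        push_cast at h
        exact h

lemma D_even (hn : 2 ≤ n) (z : Fin n → ℤ) : Even (∑ i, (z i - wvec z i)^2) := by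
  have hn0 : 0 < n := by omega
  have h1 : Even ((∑ i, (z i - wvec z i)^2) - (∑ i, (z i - wvec z i))) := by
    rw [← Finset.sum_sub_distrib]
    refine Finset.sum_induction _ (fun t => Even t) (fun a b ha hb => ha.add hb) Even.zero ?_
    intro i _
    have h : (z i - wvec z i)^2 - (z i - wvec z i)
        = (z i - wvec z i - 1) * ((z i - wvec z i - 1) + 1) := by ring
    rw [h]; exact Int.even_mul_succ_self _
  have h2 : (∑ i, (z i - wvec z i)) = 2 * z (prv ⟨0, hn0⟩) := by
    rw [Finset.sum_sub_distrib]
    have hterm : ∀ i : Fin n, wvec z i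
        = z (prv i) - (if i = (⟨0, hn0⟩ : Fin n) then 2 * z (prv i) else 0) := by
      intro i
      simp only [wvec, sgnZ]
      by_cases h : (i : ℕ) = 0
      · rw [if_pos h, if_pos (Fin.ext h)]; ring
      · rw [if_neg h, if_neg (fun hh => h (congrArg Fin.val hh))]; ring
    have h3 : ∑ i, wvec z i = (∑ i, z (prv i)) - 2 * z (prv ⟨0, hn0⟩) := by
      rw [Finset.sum_congr rfl (fun i _ => hterm i), Finset.sum_sub_distrib,
        Finset.sum_ite_eq' Finset.univ]
      simp
    have h4 : ∑ i, z (prv i) = ∑ i, z i := Fintype.sum_bijective prv prv_bij _ _ (fun i => rfl)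
    rw [h3, h4]; ring
  have h5 : (∑ i, (z i - wvec z i)^2)
      = ((∑ i, (z i - wvec z i)^2) - (∑ i, (z i - wvec z i))) + (∑ i, (z i - wvec z i)) := by
    ring
  rw [h5]
  refine h1.add ?_
  rw [h2]
  exact ⟨_, two_mul _⟩

lemma D_zero (hn : 2 ≤ n) (z : Fin n → ℤ) (hD : ∑ i, (z i - wvec z i)^2 = 0) :
    ∀ i, z i = 0 := by
  have hn0 : 0 < n := by omega
  have hall : ∀ i, z i = wvec z i := by
    intro i
    have h := (Finset.sum_eq_zero_iff_of_nonneg (fun i _ => sq_nonneg _)).mp hD i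
      (Finset.mem_univ i)
    have h' := sq_eq_zero_iff.mp h
    omega
  have hstep : ∀ m : ℕ, ∀ hm : m < n, z ⟨m, hm⟩ = z ⟨0, hn0⟩ := by
    intro m
    induction m with
    | zero => intro hm; rfl
    | succ m ih =>
      intro hm
      have h1 := hall ⟨m+1, hm⟩
      have hprv : prv (⟨m+1, hm⟩ : Fin n) = ⟨m, by omega⟩ := by
        apply Fin.ext
        rw [prv_val]
        simp only [Fin.val_mk]
        rw [if_neg (Nat.succ_ne_zero m)]
        omega
      have h2 : wvec z ⟨m+1, hm⟩ = z ⟨m, by omega⟩ := by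
        simp only [wvec, sgnZ, Fin.val_mk]
        rw [if_neg (Nat.succ_ne_zero m), hprv, one_mul]
      rw [h2] at h1
      rw [h1]
      exact ih (by omega)
  have h0 : z ⟨0, hn0⟩ = 0 := by
    have h1 := hall ⟨0, hn0⟩
    have hprv : prv (⟨0, hn0⟩ : Fin n) = ⟨n-1, by omega⟩ := by
      apply Fin.ext
      rw [prv_val]
      simp
    have h2 : wvec z ⟨0, hn0⟩ = -1 * z ⟨n-1, by omega⟩ := by
      simp only [wvec, sgnZ, Fin.val_mk]
      simp only [if_true, hprv]
    rw [h2] at h1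
    have h3 : z (⟨n-1, by omega⟩ : Fin n) = z ⟨0, hn0⟩ := hstep (n-1) (by omega)
    rw [h3] at h1
    omega
  intro i
  have h4 : z i = z ⟨0, hn0⟩ := hstep (i : ℕ) i.isLt
  rw [h4, h0]

lemma sum_sq_one (z : Fin n → ℤ) (h : ∑ i, (z i)^2 = 1) :
    ∃ j : Fin n, (z j = 1 ∨ z j = -1) ∧ ∀ i, i ≠ j → z i = 0 := by
  have hex : ∃ j, z j ≠ 0 := by
    by_contra hc; push_neg at hc
    rw [Finset.sum_eq_zero (fun i _ => by rw [hc i]; ring)] at h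
    omega
  obtain ⟨j, hj⟩ := hex
  have h1 : 1 ≤ (z j)^2 := by
    have h1a : (z j)^2 ≠ 0 := pow_ne_zero _ hj
    have h1b : 0 ≤ (z j)^2 := sq_nonneg _
    omega
  have hsplit : (∑ i ∈ Finset.univ.erase j, (z i)^2) + (z j)^2 = 1 := by
    rw [Finset.sum_erase_add Finset.univ _ (Finset.mem_univ j)]; exact h
  have hnn : ∀ i ∈ Finset.univ.erase j, 0 ≤ (z i)^2 := fun i _ => sq_nonneg _
  have hz : ∑ i ∈ Finset.univ.erase j, (z i)^2 = 0 :=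
    le_antisymm (by have := Finset.sum_nonneg hnn; omega) (Finset.sum_nonneg hnn)
  have h3 := (Finset.sum_eq_zero_iff_of_nonneg hnn).mp hz
  refine ⟨j, ?_, ?_⟩
  · have hsq : (z j)^2 = 1 := by omega
    have hfac : (z j - 1) * (z j + 1) = 0 := by
      have : (z j - 1) * (z j + 1) = (z j)^2 - 1 := by ring
      rw [this, hsq]; ring
    rcases mul_eq_zero.mp hfac with hcc | hcc
    · left; omega
    · right; omega
  · intro i hi
    exact sq_eq_zero_iff.mp (h3 i (Finset.mem_erase.mpr ⟨hi, Finset.mem_univ i⟩))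

lemma key (p q : ℝ) (hq : 0 < q) (hqp : q < p) (hn : 2 ≤ n) (z : Fin n → ℤ) (a b : Fin n)
    (hab : a ≠ b) (ε δ : ℝ) (hε : ε = 1 ∨ ε = -1) (hδ : δ = 1 ∨ δ = -1)
    (hx : (tilingMatrix p q n).mulVec (fun i => (z i : ℝ))
      = fun i => (if i = a then q * ε else 0) + (if i = b then -(p * δ) else 0)) :
    ((b : ℕ) = (a : ℕ) + 1 ∧ δ = ε) ∨ ((a : ℕ) = n - 1 ∧ (b : ℕ) = 0 ∧ δ = -ε) := by
  have hp : (0:ℝ) < p := hq.trans hqp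
  have hε2 : ε^2 = 1 := by rcases hε with h|h <;> rw [h] <;> ring
  have hδ2 : δ^2 = 1 := by rcases hδ with h|h <;> rw [h] <;> ring
  -- sum of squares of the right-hand side
  have hsum : ∑ i, ((if i = a then q * ε else 0) + (if i = b then -(p * δ) else 0))^2
      = q^2 + p^2 := by
    have hterm : ∀ i : Fin n, ((if i = a then q*ε else 0) + (if i = b then -(p*δ) else 0))^2
        = (if i = a then q^2*ε^2 else 0) + (if i = b then p^2*δ^2 else 0) := by
      intro i
      by_cases h1 : i = a <;> by_cases h2 : i = b
      · exact absurd (h1.symm.trans h2) hab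
      · rw [if_pos h1, if_pos h1, if_neg h2, if_neg h2]; ring
      · rw [if_neg h1, if_neg h1, if_pos h2, if_pos h2]; ring
      · rw [if_neg h1, if_neg h1, if_neg h2, if_neg h2]; ring
    rw [Finset.sum_congr rfl (fun i _ => hterm i), Finset.sum_add_distrib,
      Finset.sum_ite_eq' Finset.univ a, Finset.sum_ite_eq' Finset.univ b]
    simp only [Finset.mem_univ, if_true]
    rw [hε2, hδ2]; ring
  have hid := sum_sq_identity p q hn z
  rw [hx] at hid
  have heq : (p-q)^2 * ∑ i, ((z i:ℝ))^2 + p*q * ∑ i, ((z i:ℝ) - (wvec z i:ℝ))^2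
      = q^2 + p^2 := hid.symm.trans hsum
  -- z is nonzero
  have hz0 : ∃ i, z i ≠ 0 := by
    by_contra hc; push_neg at hc
    have hzz : (fun i : Fin n => ((z i : ℤ):ℝ)) = (0 : Fin n → ℝ) := by
      funext i; rw [hc i]; norm_num
    rw [hzz, Matrix.mulVec_zero] at hx
    have hxa := congrFun hx a
    rw [if_pos rfl, if_neg hab] at hxa
    simp only [Pi.zero_apply, add_zero] at hxa
    rcases hε with h|h <;> rw [h] at hxa <;> nlinarith
  -- integer facts
  have hDev := D_even hn z
  have hDne : ¬ (∑ i, (z i - wvec z i)^2 = 0) := by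
    intro h
    obtain ⟨i, hi⟩ := hz0
    exact hi (D_zero hn z h i)
  have hD2 : 2 ≤ ∑ i, (z i - wvec z i)^2 := by
    have hnn : 0 ≤ ∑ i, (z i - wvec z i)^2 := Finset.sum_nonneg (fun i _ => sq_nonneg _)
    rcases hDev with ⟨r, hr⟩
    omega
  have hS1 : 1 ≤ ∑ i, (z i)^2 := by
    obtain ⟨i, hi⟩ := hz0
    have h1a : (z i)^2 ≠ 0 := pow_ne_zero _ hi
    have h1b : 0 ≤ (z i)^2 := sq_nonneg _
    have h1c : (z i)^2 ≤ ∑ i, (z i)^2 :=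
      Finset.single_le_sum (fun i _ => sq_nonneg (z i)) (Finset.mem_univ i)
    omega
  -- cast sums
  have hSr : ∑ i, ((z i:ℝ))^2 = ((∑ i, (z i)^2 : ℤ) : ℝ) := by push_cast; rfl
  have hDr : ∑ i, ((z i:ℝ) - (wvec z i:ℝ))^2 = ((∑ i, (z i - wvec z i)^2 : ℤ) : ℝ) := by
    push_cast; rfl
  rw [hSr, hDr] at heq
  have hSZ : ∑ i, (z i)^2 = 1 := by
    by_contra hc
    have h2S : 2 ≤ ∑ i, (z i)^2 := by omega
    have hc1 : (2:ℝ) ≤ ((∑ i, (z i)^2 : ℤ) : ℝ) := by exact_mod_cast h2S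
    have hc2 : (2:ℝ) ≤ ((∑ i, (z i - wvec z i)^2 : ℤ) : ℝ) := by exact_mod_cast hD2
    nlinarith [sq_nonneg (p - q), mul_pos hq hp]
  obtain ⟨j, hj1, hj2⟩ := sum_sq_one z hSZ
  set η : ℝ := if z j = 1 then 1 else -1 with hηdef
  have hη : η = 1 ∨ η = -1 := by rw [hηdef]; split_ifs <;> simp
  have hzc : ∀ i, ((z i : ℤ):ℝ) = if i = j then η else 0 := by
    intro i
    by_cases h : i = j
    · rw [if_pos h, h]
      rcases hj1 with h1|h1
      · rw [h1, hηdef, if_pos h1]; norm_num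
      · rw [h1, hηdef, if_neg (by omega)]; norm_num
    · rw [if_neg h, hj2 i h]; norm_num
  rw [A_mulVec p q hn] at hx
  have hxj := congrFun hx j
  have hxnj := congrFun hx (nxt j)
  rw [hzc j, if_pos rfl, hzc (prv j), if_neg (prv_ne hn j)] at hxj
  simp only [mul_zero, sub_zero] at hxj
  -- hxj : q * η = (if j = a ...) + (if j = b ...)
  have hja : j = a ∧ η = ε := by
    by_cases h1 : j = a
    · refine ⟨h1, ?_⟩
      rw [if_pos h1, if_neg (fun hh => hab (by rw [← h1, hh])), add_zero] at hxj
      exact mul_left_cancel₀ (ne_of_gt hq) hxj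
    · exfalso
      rw [if_neg h1, zero_add] at hxj
      by_cases h2 : j = b
      · rw [if_pos h2] at hxj
        rcases hη with h|h <;> rcases hδ with h'|h' <;> rw [h, h'] at hxj <;> linarith
      · rw [if_neg h2] at hxj
        rcases hη with h|h <;> rw [h] at hxj <;> linarith
  obtain ⟨hja, hηε⟩ := hja
  rw [hzc (nxt j), if_neg (nxt_ne hn j), hzc (prv (nxt j)), if_pos (prv_nxt j)] at hxnj
  simp only [mul_zero, zero_sub] at hxnj
  -- hxnj : -(p * (sgn (nxt j) * η)) = (if nxt j = a ...) + (if nxt j = b ...)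
  have hnja : ¬ nxt j = a := fun hh => nxt_ne hn j (hh.trans hja.symm)
  rw [if_neg hnja, zero_add] at hxnj
  by_cases h2 : nxt j = b
  · rw [if_pos h2] at hxnj
    have hδeq : δ = sgn (nxt j) * η := by
      have h' : p * (sgn (nxt j) * η) = p * δ := by linarith
      exact (mul_left_cancel₀ (ne_of_gt hp) h').symm
    by_cases h3 : (j:ℕ) = n - 1
    · right
      have hb0 : (b:ℕ) = 0 := by rw [← h2, nxt_val, if_pos h3]
      have hsgn : sgn (nxt j) = -1 := by
        simp only [sgn]
        rw [if_pos (by rw [nxt_val, if_pos h3])]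
      refine ⟨by rw [← hja]; exact h3, hb0, ?_⟩
      rw [hδeq, hsgn, hηε]; ring
    · left
      have hb : (b:ℕ) = (a:ℕ) + 1 := by rw [← h2, nxt_val, if_neg h3, ← hja]
      have hsgn : sgn (nxt j) = 1 := by
        simp only [sgn]
        rw [if_neg (by rw [nxt_val, if_neg h3]; omega)]
      refine ⟨hb, ?_⟩
      rw [hδeq, hsgn, hηε]; ring
  · exfalso
    rw [if_neg h2] at hxnj
    have hsg : sgn (nxt j) = 1 ∨ sgn (nxt j) = -1 := by
      simp only [sgn]; split_ifs <;> simp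
    rcases hsg with h|h <;> rcases hη with h'|h' <;> rw [h, h'] at hxnj <;> linarith



lemma signedPerm_repr (S : Matrix (Fin n) (Fin n) ℝ) (hS : IsSignedPerm S) :
    ∃ (σ : Fin n → Fin n) (ε : Fin n → ℝ), Function.Injective σ ∧
      (∀ j, ε j = 1 ∨ ε j = -1) ∧ (∀ i j, S i j = if i = σ j then ε j else 0) := by
  obtain ⟨h01, hrow, hcol⟩ := hS
  choose σ hσ1 hσ2 using hcol
  refine ⟨σ, fun j => S (σ j) j, ?_, ?_, ?_⟩
  · intro j j' hjj
    obtain ⟨r, hr1, hr2⟩ := hrow (σ j)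
    have e1 : j = r := hr2 j (hσ1 j)
    have e2 : j' = r := hr2 j' (by rw [hjj]; exact hσ1 j')
    rw [e1, e2]
  · intro j
    rcases h01 (σ j) j with h|h|h
    · exact absurd h (hσ1 j)
    · left; exact h
    · right; exact h
  · intro i j
    by_cases h : i = σ j
    · rw [if_pos h, h]
    · rw [if_neg h]
      by_contra hne
      exact h (hσ2 j i hne)

lemma S_col (S : Matrix (Fin n) (Fin n) ℝ) (σ : Fin n → Fin n) (ε : Fin n → ℝ)
    (hSe : ∀ i j, S i j = if i = σ j then ε j else 0) (j j' : Fin n) (u v : ℝ) :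
    S.mulVec (fun k => (if k = j then u else 0) + (if k = j' then v else 0))
      = fun i => (if i = σ j then ε j * u else 0) + (if i = σ j' then ε j' * v else 0) := by
  funext i
  simp only [Matrix.mulVec, dotProduct]
  have hterm : ∀ k, S i k * ((if k = j then u else 0) + (if k = j' then v else 0))
      = (if k = j then S i k * u else 0) + (if k = j' then S i k * v else 0) := by
    intro k; split_ifs <;> ring
  rw [Finset.sum_congr rfl (fun k _ => hterm k), Finset.sum_add_distrib,
    Finset.sum_ite_eq' Finset.univ j, Finset.sum_ite_eq' Finset.univ j']
  simp only [Finset.mem_univ, if_true]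
  rw [hSe i j, hSe i j']
  split_ifs <;> ring

lemma A_col (p q : ℝ) (hn : 2 ≤ n) (j : Fin n) :
    (tilingMatrix p q n).mulVec (fun i => (((if i = j then (1:ℤ) else 0) : ℤ) : ℝ))
      = fun i => (if i = j then q else 0) + (if i = nxt j then -(p * sgn (nxt j)) else 0) := by
  rw [A_mulVec p q hn]
  funext i
  have hc : ∀ k : Fin n, (((if k = j then (1:ℤ) else 0) : ℤ) : ℝ) = if k = j then 1 else 0 := by
    intro k; split_ifs <;> norm_num
  rw [hc i, hc (prv i)]
  by_cases h1 : i = j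
  · have h2 : ¬ prv i = j := by rw [h1]; exact prv_ne hn j
    have h3 : ¬ i = nxt j := fun hh => nxt_ne hn j (hh.symm.trans h1)
    simp only [if_pos h1, if_neg h2, if_neg h3]; ring
  · by_cases h2 : prv i = j
    · have h3 : i = nxt j := prv_eq_iff.mp h2
      simp only [if_neg h1, if_pos h2, if_pos h3]
      rw [h3]; ring
    · have h3 : ¬ i = nxt j := fun hh => h2 (prv_eq_iff.mpr hh)
      simp only [if_neg h1, if_neg h2, if_neg h3]; ring

lemma forward (p q : ℝ) (hq : 0 < q) (hqp : q < p) (hn : 2 ≤ n)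
    (S : Matrix (Fin n) (Fin n) ℝ) (hS : IsSignedPerm S)
    (hL : ∀ x : Fin n → ℝ, x ∈ latticeA p q n → S.mulVec x ∈ latticeA p q n) :
    ∃ k : ℕ, k < 2 * n ∧ S = cycGen n ^ k := by
  have hn0 : 0 < n := by omega
  obtain ⟨σ, ε, hσinj, hε, hSe⟩ := signedPerm_repr S hS
  have hsgnpm : ∀ i : Fin n, sgn i = 1 ∨ sgn i = -1 := by
    intro i; simp only [sgn]; split_ifs <;> simp
  have hrel : ∀ j : Fin n,
      (((σ (nxt j)) : ℕ) = ((σ j) : ℕ) + 1 ∧ sgn (nxt j) * ε (nxt j) = ε j) ∨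
      (((σ j) : ℕ) = n - 1 ∧ ((σ (nxt j)) : ℕ) = 0 ∧ sgn (nxt j) * ε (nxt j) = -ε j) := by
    intro j
    have hmem : (tilingMatrix p q n).mulVec (fun i => (((if i = j then (1:ℤ) else 0) : ℤ) : ℝ))
        ∈ latticeA p q n := ⟨fun i => if i = j then 1 else 0, rfl⟩
    obtain ⟨z, hz⟩ := hL _ hmem
    rw [A_col p q hn j, S_col S σ ε hSe j (nxt j) q (-(p * sgn (nxt j)))] at hz
    have hform : (tilingMatrix p q n).mulVec (fun i => (z i : ℝ))
        = fun i => (if i = σ j then q * ε j else 0)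
          + (if i = σ (nxt j) then -(p * (sgn (nxt j) * ε (nxt j))) else 0) := by
      rw [← hz]
      funext i
      by_cases h1 : i = σ j <;> by_cases h2 : i = σ (nxt j) <;> simp [h1, h2] <;> ring
    have hab : σ j ≠ σ (nxt j) := fun hh => nxt_ne hn j (hσinj hh.symm)
    have hδpm : sgn (nxt j) * ε (nxt j) = 1 ∨ sgn (nxt j) * ε (nxt j) = -1 := by
      rcases hsgnpm (nxt j) with h|h <;> rcases hε (nxt j) with h'|h' <;> rw [h, h'] <;> norm_num
    exact key p q hq hqp hn z (σ j) (σ (nxt j)) hab (ε j) (sgn (nxt j) * ε (nxt j))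
      (hε j) hδpm hform
  set t : Fin n → ℕ := fun j => ((σ j) : ℕ) + (if ε j = 1 then 0 else n) with htdef
  have ht_lt : ∀ j, t j < 2 * n := by
    intro j
    have := (σ j).isLt
    simp only [htdef]
    split_ifs <;> omega
  have hstep : ∀ j : Fin n, (j : ℕ) + 1 < n → t (nxt j) % (2*n) = (t j + 1) % (2*n) := by
    intro j hj
    have hsgn1 : sgn (nxt j) = 1 := by
      simp only [sgn]
      rw [if_neg (by rw [nxt_val, if_neg (by omega)]; omega)]
    rcases hrel j with ⟨h1, h2⟩ | ⟨h1, h2, h3⟩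
    · rw [hsgn1, one_mul] at h2
      have hteq : t (nxt j) = t j + 1 := by
        simp only [htdef]
        rw [h1, h2]
        split_ifs <;> omega
      rw [hteq]
    · rw [hsgn1, one_mul] at h3
      rcases hε j with he | he
      · have hne' : ε (nxt j) = -1 := by rw [h3, he]
        have ht1 : t (nxt j) = n := by
          simp only [htdef]
          rw [h2, hne', if_neg (by norm_num)]
          omega
        have ht2 : t j = n - 1 := by
          simp only [htdef]
          rw [h1, if_pos he]
          omega
        rw [ht1, ht2, show n - 1 + 1 = n by omega]
      · have hne' : ε (nxt j) = 1 := by rw [h3, he]; norm_num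
        have ht1 : t (nxt j) = 0 := by
          simp only [htdef]
          rw [h2, if_pos hne']
        have ht2 : t j = n - 1 + n := by
          simp only [htdef]
          rw [h1, if_neg (by rw [he]; norm_num)]
        rw [ht1, ht2, Nat.zero_mod, show n - 1 + n + 1 = 2*n by omega, Nat.mod_self]
  have hind : ∀ m : ℕ, ∀ hm : m < n, t ⟨m, hm⟩ % (2*n) = (t ⟨0, hn0⟩ + m) % (2*n) := by
    intro m
    induction m with
    | zero => intro hm; rfl
    | succ m ih =>
      intro hm
      have hm' : m < n := by omega
      have hnx : nxt (⟨m, hm'⟩ : Fin n) = ⟨m+1, hm⟩ := by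
        apply Fin.ext
        rw [nxt_val]
        simp only [Fin.val_mk]
        rw [if_neg (by omega)]
      have h1 := hstep ⟨m, hm'⟩ (by simp only [Fin.val_mk]; omega)
      rw [hnx] at h1
      rw [h1]
      have h2 := ih hm'
      calc (t ⟨m, hm'⟩ + 1) % (2*n) = ((t ⟨m, hm'⟩ % (2*n)) + 1) % (2*n) := by
            rw [Nat.mod_add_mod]
        _ = ((t ⟨0, hn0⟩ + m) % (2*n) + 1) % (2*n) := by rw [h2]
        _ = (t ⟨0, hn0⟩ + (m+1)) % (2*n) := by rw [Nat.mod_add_mod, Nat.add_assoc]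
  refine ⟨t ⟨0, hn0⟩, ht_lt _, ?_⟩
  rw [powFormula hn]
  ext i j
  rw [hSe i j]
  simp only [P, Matrix.of_apply]
  have htj : t j = ((j : ℕ) + t ⟨0, hn0⟩) % (2*n) := by
    have h1 : t j % (2*n) = (t ⟨0, hn0⟩ + (j:ℕ)) % (2*n) := hind (j : ℕ) j.isLt
    rw [Nat.mod_eq_of_lt (ht_lt j)] at h1
    rw [h1, Nat.add_comm]
  have hσj : ((σ j) : ℕ) = t j % n := by
    simp only [htdef]
    split_ifs with h
    · rw [Nat.add_zero, Nat.mod_eq_of_lt (σ j).isLt]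
    · rw [Nat.add_mod_right, Nat.mod_eq_of_lt (σ j).isLt]
  have hmod : t j % n = ((j:ℕ) + t ⟨0, hn0⟩) % n := by
    rw [htj, Nat.mod_mod_of_dvd _ ⟨2, by ring⟩]
  have hcond : (i = σ j) ↔ ((i:ℕ) = ((j:ℕ) + t ⟨0, hn0⟩) % n) := by
    rw [Fin.ext_iff, hσj, hmod]
  have hsign : ε j = (-1:ℝ)^(((j:ℕ) + t ⟨0, hn0⟩)/n) := by
    have hdecomp : (j:ℕ) + t ⟨0, hn0⟩
        = t j + (2 * (((j:ℕ) + t ⟨0, hn0⟩)/(2*n))) * n := by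
      have hd := Nat.div_add_mod ((j:ℕ) + t ⟨0, hn0⟩) (2*n)
      have hmul : 2*n*(((j:ℕ) + t ⟨0, hn0⟩)/(2*n)) = (2*(((j:ℕ) + t ⟨0, hn0⟩)/(2*n)))*n := by
        ring
      rw [htj]
      omega
    have hdiv : ((j:ℕ) + t ⟨0, hn0⟩)/n = t j / n + 2 * (((j:ℕ) + t ⟨0, hn0⟩)/(2*n)) := by
      conv_lhs => rw [hdecomp]
      rw [Nat.add_mul_div_right _ _ hn0]
    rw [hdiv, pow_add, pow_mul, neg_one_sq, one_pow, mul_one]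
    simp only [htdef]
    split_ifs with h
    · rw [Nat.add_zero, Nat.div_eq_of_lt (σ j).isLt, pow_zero]; exact h
    · rw [Nat.add_div_right _ hn0, Nat.div_eq_of_lt (σ j).isLt, pow_one]
      rcases hε j with he | he
      · exact absurd he h
      · exact he
  by_cases hcnd : i = σ j
  · rw [if_pos hcnd, if_pos (hcond.mp hcnd)]
    exact hsign
  · rw [if_neg hcnd, if_neg (fun hh => hcnd (hcond.mpr hh))]

end StabProof


/-- The stabilizer of the lattice `A·ℤⁿ` inside the hyperoctahedral group is the
cyclic group of order `2n` generated by `S₀`. -/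
theorem stabilizer_cyclic (p q : ℝ) (hq : 0 < q) (hqp : q < p) (n : ℕ) (hn : 2 ≤ n) :
    (∀ S : Matrix (Fin n) (Fin n) ℝ,
      (IsSignedPerm S ∧ ∀ x : Fin n → ℝ, x ∈ latticeA p q n ↔ S.mulVec x ∈ latticeA p q n) ↔
        ∃ k : ℕ, k < 2 * n ∧ S = cycGen n ^ k) ∧
      cycGen n ^ (2 * n) = 1 ∧
      ∀ m : ℕ, 0 < m → m < 2 * n → cycGen n ^ m ≠ 1 := by
  refine ⟨?_, StabProof.pow_two_n hn, fun m hm0 hm => StabProof.pow_ne_one hn m hm0 hm⟩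
  intro S
  constructor
  · rintro ⟨hS, hL⟩
    exact StabProof.forward p q hq hqp hn S hS (fun x hx => (hL x).mp hx)
  · rintro ⟨k, hk, rfl⟩
    refine ⟨?_, ?_⟩
    · rw [StabProof.powFormula hn]
      exact StabProof.isSignedPerm_P (by omega) k
    · intro x
      constructor
      · exact StabProof.pow_preserves p q hn k x
      · intro hx
        have h1 := StabProof.pow_preserves p q hn (2*n - k) _ hx
        rw [Matrix.mulVec_mulVec, ← pow_add, show 2*n - k + k = 2*n by omega,
          StabProof.pow_two_n hn, Matrix.one_mulVec] at h1
        exact h1
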